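/- Let r, q ∈ ℕ and let Φ : {0,1}^r × {0,1}^r → ℝ^{q×q} be a family of real matrices. For multi-indices m, n ∈ {0,1}^r, let S(m,n) = {(i,j) ∈ {0,1}^r × {0,1}^r : for every coordinate t, the unordered pair {i_t, j_t} equals the unordered pair {m_t, n_t} (as multisets)}. Suppose that for every pair (m, n) ∈ {0,1}^r × {0,1}^r, the matrix ∑_{(i,j) ∈ S(m,n)} Φ(i,j) satisfies ζᵀ(∑_{(i,j) ∈ S(m,n)} Φ(i,j))ζ < 0 for all ζ ≠ 0. Then for every w : Fin r → [0,1], defining α_i = ∏_{t=1}^r w_t^{i_t} (with w_t^1 = w_t and w_t^0 = 1 − w_t), the matrix ∑_{i ∈ {0,1}^r} ∑_{j ∈ {0,1}^r} α_i · α_j · Φ(i,j) satisfies ζᵀ(∑_i ∑_j α_i α_j Φ(i,j))ζ < 0 for all ζ ≠ 0. -/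

import Mathlib

open Matrix

private lemma pairBool : ∀ {a b c d : Bool}, ({a, b} : Multiset Bool) = {c, d} →
    (a = c ∧ b = d) ∨ (a = d ∧ b = c) := by decide

theorem polytopic_relaxation {r q : ℕ}
    (Φ : (Fin r → Bool) → (Fin r → Bool) → Matrix (Fin q) (Fin q) ℝ)
    (hvertex : ∀ mi ni : Fin r → Bool, ∀ ζ : Fin q → ℝ, ζ ≠ 0 →
      ζ ⬝ᵥ ((∑ ij ∈ Finset.univ.filter
          (fun ij : (Fin r → Bool) × (Fin r → Bool) =>
            ∀ t, ({ij.1 t, ij.2 t} : Multiset Bool) = {mi t, ni t}),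
          Φ ij.1 ij.2) *ᵥ ζ) < 0) :
    ∀ w : Fin r → ℝ, (∀ t, 0 ≤ w t ∧ w t ≤ 1) →
      ∀ ζ : Fin q → ℝ, ζ ≠ 0 →
        ζ ⬝ᵥ ((∑ i : Fin r → Bool, ∑ j : Fin r → Bool,
          ((∏ t, (if i t then w t else 1 - w t)) *
           (∏ t, (if j t then w t else 1 - w t))) • Φ i j) *ᵥ ζ) < 0 := by
  intro w hw ζ hζ
  set α : (Fin r → Bool) → ℝ := fun i => ∏ t, (if i t then w t else 1 - w t) with hα
  set S : (Fin r → Bool) × (Fin r → Bool) → Finset ((Fin r → Bool) × (Fin r → Bool)) :=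
      fun p => Finset.univ.filter
        (fun ij : (Fin r → Bool) × (Fin r → Bool) =>
          ∀ t, ({ij.1 t, ij.2 t} : Multiset Bool) = {p.1 t, p.2 t}) with hS
  set B : (Fin r → Bool) × (Fin r → Bool) → ℝ := fun p => ζ ⬝ᵥ (Φ p.1 p.2 *ᵥ ζ) with hB
  have hmemS : ∀ p p' : (Fin r → Bool) × (Fin r → Bool),
      p' ∈ S p ↔ ∀ t, ({p'.1 t, p'.2 t} : Multiset Bool) = {p.1 t, p.2 t} := by
    intro p p'; simp [hS]
  have hself : ∀ p, p ∈ S p := by intro p; rw [hmemS]; intro t; rfl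
  have hsymm : ∀ p p', p' ∈ S p → p ∈ S p' := by
    intro p p' h; rw [hmemS] at h ⊢; intro t; exact (h t).symm
  have hSeq : ∀ p p', p' ∈ S p → S p' = S p := by
    intro p p' h; rw [hmemS] at h
    ext x; rw [hmemS, hmemS]
    constructor <;> intro hx t
    · exact (hx t).trans (h t)
    · exact (hx t).trans (h t).symm
  have hfilter : ∀ (p : (Fin r → Bool) × (Fin r → Bool))
      (g : (Fin r → Bool) × (Fin r → Bool) → ℝ),
      ∑ x ∈ S p, g x = ∑ x : (Fin r → Bool) × (Fin r → Bool),
        if x ∈ S p then g x else 0 := by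
    intro p g
    rw [Finset.sum_filter]
    apply Finset.sum_congr rfl
    intro x _
    by_cases hx : x ∈ S p
    · rw [if_pos ((hmemS p x).mp hx), if_pos hx]
    · rw [if_neg (fun h => hx ((hmemS p x).mpr h)), if_neg hx]
  have hα0 : ∀ i, 0 ≤ α i := by
    intro i; apply Finset.prod_nonneg; intro t _
    by_cases h : i t = true
    · simpa [h] using (hw t).1
    · simp only [Bool.not_eq_true] at h
      rw [h, if_neg (by simp)]
      linarith [(hw t).2]
  have hαconst : ∀ p p', p' ∈ S p → α p'.1 * α p'.2 = α p.1 * α p.2 := by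
    intro p p' h; rw [hmemS] at h
    simp only [hα, ← Finset.prod_mul_distrib]
    apply Finset.prod_congr rfl
    intro t _
    rcases pairBool (h t) with ⟨h1, h2⟩ | ⟨h1, h2⟩ <;> rw [h1, h2] <;> ring
  have hαsum : ∑ i : Fin r → Bool, α i = 1 := by
    have h := Finset.prod_univ_sum (κ := fun _ : Fin r => Bool)
      (fun _ => Finset.univ) (fun t b => if b then w t else 1 - w t)
    rw [Fintype.piFinset_univ] at h
    rw [hα, ← h]
    apply Finset.prod_eq_one
    intro t _
    rw [Fintype.sum_bool]
    norm_num
  obtain ⟨i0, hi0⟩ : ∃ i, 0 < α i := by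
    by_contra hcon
    push_neg at hcon
    have h0 : ∑ i : Fin r → Bool, α i = 0 :=
      Finset.sum_eq_zero fun i _ => le_antisymm (hcon i) (hα0 i)
    rw [hαsum] at h0; norm_num at h0
  have sum_mv : ∀ {ι : Type} [DecidableEq ι] (s : Finset ι) (A : ι → Matrix (Fin q) (Fin q) ℝ),
      ζ ⬝ᵥ ((∑ i ∈ s, A i) *ᵥ ζ) = ∑ i ∈ s, ζ ⬝ᵥ (A i *ᵥ ζ) := by
    intro ι _ s A
    induction s using Finset.induction_on with
    | empty => simp [Matrix.zero_mulVec]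
    | insert _ _ hnotmem ih =>
      rw [Finset.sum_insert hnotmem, Finset.sum_insert hnotmem,
        Matrix.add_mulVec, dotProduct_add, ih]
  have hgoal : ζ ⬝ᵥ ((∑ i : Fin r → Bool, ∑ j : Fin r → Bool,
        (α i * α j) • Φ i j) *ᵥ ζ)
      = ∑ p : (Fin r → Bool) × (Fin r → Bool), (α p.1 * α p.2) * B p := by
    rw [sum_mv]
    rw [Fintype.sum_prod_type (f := fun p : (Fin r → Bool) × (Fin r → Bool) =>
      (α p.1 * α p.2) * B p)]
    apply Finset.sum_congr rfl
    intro i _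
    rw [sum_mv]
    apply Finset.sum_congr rfl
    intro j _
    rw [smul_mulVec, dotProduct_smul, smul_eq_mul, hB]
  rw [hgoal]
  set c : (Fin r → Bool) × (Fin r → Bool) → ℝ :=
      fun p => α p.1 * α p.2 / (S p).card with hc
  have hc0 : ∀ p, 0 ≤ c p :=
    fun p => div_nonneg (mul_nonneg (hα0 _) (hα0 _)) (Nat.cast_nonneg _)
  have hcard : ∀ p, 0 < ((S p).card : ℝ) := by
    intro p
    exact_mod_cast Finset.card_pos.2 ⟨p, hself p⟩
  have hkey : ∑ p : (Fin r → Bool) × (Fin r → Bool), (α p.1 * α p.2) * B p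
      = ∑ p : (Fin r → Bool) × (Fin r → Bool), c p * ∑ p' ∈ S p, B p' := by
    have step1 : ∀ p : (Fin r → Bool) × (Fin r → Bool),
        c p * ∑ p' ∈ S p, B p' = ∑ p' : (Fin r → Bool) × (Fin r → Bool),
          if p' ∈ S p then c p * B p' else 0 := by
      intro p
      rw [Finset.mul_sum, hfilter p (fun p' => c p * B p')]
    simp only [step1]
    rw [Finset.sum_comm]
    symm
    apply Finset.sum_congr rfl
    intro p' _
    have step2 : ∑ p : (Fin r → Bool) × (Fin r → Bool),
        (if p' ∈ S p then c p * B p' else 0)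
        = ∑ p ∈ S p', c p * B p' := by
      rw [hfilter p' (fun p => c p * B p')]
      apply Finset.sum_congr rfl
      intro x _
      by_cases hx : p' ∈ S x
      · rw [if_pos hx, if_pos (hsymm _ _ hx)]
      · rw [if_neg hx, if_neg (fun h => hx (hsymm _ _ h))]
    rw [step2]
    have step3 : ∀ p ∈ S p', c p * B p'
        = (α p'.1 * α p'.2 / (S p').card) * B p' := by
      intro p hp
      simp only [hc, hαconst p' p hp, hSeq p' p hp]
    rw [Finset.sum_congr rfl step3, Finset.sum_const, nsmul_eq_mul]
    have hne : ((S p').card : ℝ) ≠ 0 := ne_of_gt (hcard p')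
    field_simp
  rw [hkey]
  have hterm : ∀ p : (Fin r → Bool) × (Fin r → Bool), (∑ p' ∈ S p, B p') < 0 := by
    intro p
    have h := hvertex p.1 p.2 ζ hζ
    rw [sum_mv] at h
    exact h
  have hle : ∀ p ∈ (Finset.univ : Finset ((Fin r → Bool) × (Fin r → Bool))),
      c p * ∑ p' ∈ S p, B p' ≤ 0 :=
    fun p _ => mul_nonpos_of_nonneg_of_nonpos (hc0 p) (hterm p).le
  have hlt : c (i0, i0) * ∑ p' ∈ S (i0, i0), B p' < 0 := by
    apply mul_neg_of_pos_of_neg _ (hterm _)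
    exact div_pos (mul_pos hi0 hi0) (hcard _)
  have hfin := Finset.sum_lt_sum (g := fun _ : (Fin r → Bool) × (Fin r → Bool) => (0:ℝ))
    hle ⟨(i0, i0), Finset.mem_univ _, hlt⟩
  simpa using hfin
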